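/- Consider the path P on n = k² + 1 vertices x_1, …, x_n where k is even, colored so that vertex x_j is red iff ⌈j/k⌉ is odd (for j ≤ k²) and x_{k²+1} is blue. For any set S of at most n − 2k − 2 edges of P, consider the connected components of the graph (V, S). Then at most k − 1 components are balanced (equal numbers of red and blue vertices), every component has |#red − #blue| ≤ k + 1, and the sum over all unbalanced components except any single one of |#red − #blue| is at least k + 1. -/

import Mathlib

namespace Stmt12

def lft (S : Finset ℕ) : ℕ → ℕ
  | 0 => 0
  | t+1 => if t ∈ S then lft S t else t+1

lemma lft_le (S : Finset ℕ) : ∀ t, lft S t ≤ t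
  | 0 => le_refl _
  | t+1 => by
      rw [lft]; split
      · exact (lft_le S t).trans (by omega)
      · exact le_refl _

lemma lft_start (S : Finset ℕ) : ∀ t, lft S t = 0 ∨ (lft S t - 1) ∉ S
  | 0 => Or.inl rfl
  | t+1 => by
      rw [lft]; split
      · exact lft_start S t
      · rename_i h; right; simpa using h

lemma lft_mem (S : Finset ℕ) : ∀ t s, lft S t ≤ s → s < t → s ∈ S
  | 0, s => by omega
  | t+1, s => fun h1 h2 => by
      rw [lft] at h1; split at h1
      · rename_i ht
        rcases Nat.lt_or_ge s t with h | h
        · exact lft_mem S t s h1 h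
        · have : s = t := by omega
          exact this ▸ ht
      · omega

lemma lft_eq_iff (S : Finset ℕ) (t a : ℕ) :
    lft S t = a ↔ a ≤ t ∧ (a = 0 ∨ (a-1) ∉ S) ∧ ∀ s, a ≤ s → s < t → s ∈ S := by
  constructor
  · rintro rfl
    exact ⟨lft_le S t, lft_start S t, fun s h1 h2 => lft_mem S t s h1 h2⟩
  · rintro ⟨h1, h2, h3⟩
    induction t with
    | zero => rw [show a = 0 by omega]; rfl
    | succ t ih =>
      rcases Nat.lt_or_ge a (t+1) with h | h
      · have ht : t ∈ S := h3 t (by omega) (by omega)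
        rw [lft, if_pos ht]
        exact ih (by omega) (fun s hs1 hs2 => h3 s hs1 (by omega))
      · have : a = t+1 := by omega
        subst this
        rw [lft, if_neg (by simpa using h2.resolve_left (by omega))]

variable (S : Finset ℕ) (n : ℕ)

def nxtP (a b : ℕ) : Prop := a < b ∧ (n ≤ b ∨ (b-1) ∉ S)

instance : DecidablePred (nxtP S n a) := fun b => by unfold nxtP; infer_instance

lemma nxt_ex (a : ℕ) : ∃ b, nxtP S n a b := ⟨a + 1 + n, by omega, Or.inl (by omega)⟩

def nxt (a : ℕ) : ℕ := Nat.find (nxt_ex S n a)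

lemma nxt_gt (a : ℕ) : a < nxt S n a := (Nat.find_spec (nxt_ex S n a)).1

lemma nxt_le (a : ℕ) (h : a < n) : nxt S n a ≤ n :=
  Nat.find_le ⟨h, Or.inl (le_refl n)⟩

lemma nxt_min (a b : ℕ) (h : b < nxt S n a) : ¬ nxtP S n a b :=
  Nat.find_min (nxt_ex S n a) h

lemma mem_interval (a : ℕ) (ha : lft S a = a) (han : a < n) (t : ℕ) (htn : t < n) :
    lft S t = a ↔ a ≤ t ∧ t < nxt S n a := by
  have hstart : a = 0 ∨ (a-1) ∉ S := by
    have := lft_start S a; rwa [ha] at this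
  rw [lft_eq_iff]
  constructor
  · rintro ⟨h1, -, h3⟩
    refine ⟨h1, ?_⟩
    by_contra hle
    push_neg at hle
    have hsp : nxtP S n a (nxt S n a) := Nat.find_spec (nxt_ex S n a)
    have hgt := nxt_gt S n a
    have h5 : nxt S n a - 1 ∉ S := by
      rcases hsp.2 with h | h
      · exfalso; omega
      · exact h
    exact h5 (h3 _ (by omega) (by omega))
  · rintro ⟨h1, h2⟩
    refine ⟨h1, hstart, fun s hs1 hs2 => ?_⟩
    have hmin := nxt_min S n a (s+1) (by omega)
    unfold nxtP at hmin
    push_neg at hmin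
    have := (hmin (by omega)).2
    simpa using this

variable (k : ℕ)

def cN (t : ℕ) : Bool := decide (min (t/k) (k-1) % 2 = 0)

def rN (t : ℕ) : ℕ := ((Finset.range t).filter (fun j => cN k j = true)).card
def bN (t : ℕ) : ℕ := ((Finset.range t).filter (fun j => cN k j = false)).card

def fZ (t : ℕ) : ℤ := (rN k t : ℤ) - (bN k t : ℤ)

lemma rN_succ (t : ℕ) : rN k (t+1) = rN k t + if cN k t then 1 else 0 := by
  unfold rN
  rw [Finset.range_add_one, Finset.filter_insert]
  split <;> rename_i h
  · rw [Finset.card_insert_of_notMem (by simp)]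
  · rfl

lemma rb_sum (t : ℕ) : rN k t + bN k t = t := by
  unfold rN bN
  have := Finset.card_filter_add_card_filter_not
    (s := Finset.range t) (p := fun j => cN k j = true)
  simp only [Finset.card_range] at this
  convert this using 3
  ext j
  simp

lemma bN_succ (t : ℕ) : bN k (t+1) = bN k t + if cN k t then 0 else 1 := by
  have h1 := rb_sum k t
  have h2 := rb_sum k (t+1)
  have h3 := rN_succ k t
  split at h3 <;> rename_i h <;> simp only [h] <;> simp <;> omega

lemma fZ_succ (t : ℕ) : fZ k (t+1) = fZ k t + if cN k t then 1 else -1 := by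
  unfold fZ
  rw [rN_succ, bN_succ]
  split <;> push_cast <;> ring

lemma cN_lt (hk : 0 < k) (t : ℕ) (ht : t < k^2) : cN k t = decide (t % (2*k) < k) := by
  have h1 : t / k < k := by
    rw [Nat.div_lt_iff_lt_mul hk]
    calc t < k^2 := ht
    _ ≤ k * k := by ring_nf; omega
  have hmin : min (t/k) (k-1) = t / k := by omega
  have hq := Nat.div_add_mod t (2*k)
  have hr : t % (2*k) < 2*k := Nat.mod_lt _ (by omega)
  set q := t / (2*k) with hqdef
  set r := t % (2*k) with hrdef
  have hdiv : t / k = 2*q + r/k := by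
    rw [← hq, show 2*k*q + r = k*(2*q) + r by ring, Nat.mul_add_div hk]
  have hrk : r / k = 0 ∨ r / k = 1 := by
    rcases Nat.lt_or_ge r k with h | h
    · left; exact Nat.div_eq_of_lt h
    · right
      have : r / k < 2 := by rw [Nat.div_lt_iff_lt_mul hk]; omega
      have : 1 ≤ r / k := by rw [Nat.le_div_iff_mul_le hk]; omega
      omega
  unfold cN
  rw [hmin, hdiv]
  rcases hrk with h | h
  · have hlt : r < k := by
      by_contra hc
      push_neg at hc
      have := (Nat.one_le_div_iff hk).2 hc
      omega
    rw [h]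
    simp [Nat.mul_mod_right, hlt]
  · have hge : k ≤ r := (Nat.one_le_div_iff hk).1 (by omega)
    have h2 : (2*q+1) % 2 = 1 := by omega
    rw [h]
    simp [h2, show ¬ (r < k) by omega]

lemma step_arith (k r r' : ℕ) (hk2 : 2 ≤ k) (hr : r < 2*k)
    (hr' : r' = if r + 1 = 2*k then 0 else r + 1) :
    ((if r ≤ k then ((r:ℕ) : ℤ) else 2*(k:ℤ) - ((r:ℕ) : ℤ)) +
      if decide (r < k) = true then (1:ℤ) else -1)
    = if r' ≤ k then ((r':ℕ) : ℤ) else 2*(k:ℤ) - ((r':ℕ) : ℤ) := by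
  subst hr'
  simp only [decide_eq_true_eq]
  split_ifs <;> omega

lemma fZ_formula (hk2 : 2 ≤ k) : ∀ t, t ≤ k^2 →
    fZ k t = if t % (2*k) ≤ k then ((t % (2*k) : ℕ) : ℤ) else 2*(k:ℤ) - ((t % (2*k) : ℕ) : ℤ) := by
  intro t
  induction t with
  | zero => intro _; simp [fZ, rN, bN]
  | succ t ih =>
    intro ht
    have hk : 0 < k := by omega
    have ht' : t < k^2 := by omega
    have hr' : (t+1) % (2*k) = if t % (2*k) + 1 = 2*k then 0 else t % (2*k) + 1 := by
      rw [Nat.add_mod]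
      rw [Nat.one_mod_eq_one.mpr (by omega)]
      split <;> rename_i h
      · rw [h]; simp
      · exact Nat.mod_eq_of_lt (by have := Nat.mod_lt t (y := 2*k) (by omega); omega)
    rw [fZ_succ, cN_lt k hk t ht', ih (by omega)]
    exact step_arith k (t % (2*k)) ((t+1) % (2*k)) hk2 (Nat.mod_lt _ (by omega)) hr'

lemma fZ_bounds (hk2 : 2 ≤ k) (t : ℕ) (ht : t ≤ k^2) : 0 ≤ fZ k t ∧ fZ k t ≤ k := by
  rw [fZ_formula k hk2 t ht]
  have hr : t % (2*k) < 2*k := Nat.mod_lt _ (by omega)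
  split_ifs <;> constructor <;> omega

lemma fZ_last (hk2 : 2 ≤ k) (hke : Even k) : fZ k (k^2+1) = -1 := by
  obtain ⟨m, hm⟩ := hke
  have h0 : k^2 % (2*k) = 0 := by
    have h : k^2 = (2*k)*m := by subst hm; ring
    rw [h, Nat.mul_mod_right]
  have hf : fZ k (k^2) = 0 := by
    rw [fZ_formula k hk2 _ le_rfl]; simp [h0]
  have hdiv : k^2 / k = k := by
    rw [pow_two, Nat.mul_div_cancel_left _ (by omega)]
  have hcn : cN k (k^2) = false := by
    unfold cN
    rw [hdiv]
    have h1 : min k (k-1) = k - 1 := by omega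
    rw [h1]
    have h2 : (k-1) % 2 = 1 := by omega
    simp [h2]
  rw [fZ_succ, hf, hcn]
  simp

def rI (a b : ℕ) : ℕ := ((Finset.Ico a b).filter (fun j => cN k j = true)).card
def bI (a b : ℕ) : ℕ := ((Finset.Ico a b).filter (fun j => cN k j = false)).card

lemma rI_bI_sum (a b : ℕ) (hab : a ≤ b) : rI k a b + bI k a b = b - a := by
  unfold rI bI
  have := Finset.card_filter_add_card_filter_not
    (s := Finset.Ico a b) (p := fun j => cN k j = true)
  rw [Nat.card_Ico] at this
  convert this using 3
  ext j
  simp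

lemma rN_split (a b : ℕ) (hab : a ≤ b) : rN k b = rN k a + rI k a b := by
  unfold rN rI
  rw [Finset.range_eq_Ico,
    ← Finset.Ico_union_Ico_eq_Ico (Nat.zero_le a) hab, Finset.filter_union,
    Finset.card_union_of_disjoint]
  rw [Finset.range_eq_Ico]
  exact Finset.disjoint_filter_filter (p := fun j => cN k j = true) (q := fun j => cN k j = true)
    (Finset.Ico_disjoint_Ico_consecutive 0 a b)

lemma bN_split (a b : ℕ) (hab : a ≤ b) : bN k b = bN k a + bI k a b := by
  unfold bN bI
  rw [Finset.range_eq_Ico,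
    ← Finset.Ico_union_Ico_eq_Ico (Nat.zero_le a) hab, Finset.filter_union,
    Finset.card_union_of_disjoint]
  rw [Finset.range_eq_Ico]
  exact Finset.disjoint_filter_filter (p := fun j => cN k j = false) (q := fun j => cN k j = false)
    (Finset.Ico_disjoint_Ico_consecutive 0 a b)

lemma rI_bI_fZ (a b : ℕ) (hab : a ≤ b) :
    (rI k a b : ℤ) - (bI k a b : ℤ) = fZ k b - fZ k a := by
  have h1 := rN_split k a b hab
  have h2 := bN_split k a b hab
  unfold fZ
  omega

lemma reach_lft (S : Finset ℕ) (n : ℕ) (t : ℕ) (ht : t < n) (hl : lft S t < n) :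
    (SimpleGraph.fromRel (fun a b : Fin n => (a : ℕ) ∈ S ∧ (b : ℕ) = (a : ℕ) + 1)).Reachable
      ⟨t, ht⟩ ⟨lft S t, hl⟩ := by
  induction t with
  | zero => exact SimpleGraph.Reachable.refl _
  | succ t ih =>
    by_cases h : t ∈ S
    · have hlf : lft S (t+1) = lft S t := by rw [lft, if_pos h]
      have h1 : (SimpleGraph.fromRel (fun a b : Fin n => (a : ℕ) ∈ S ∧ (b : ℕ) = (a : ℕ) + 1)).Adj
          ⟨t+1, ht⟩ ⟨t, by omega⟩ := by
        rw [SimpleGraph.fromRel_adj]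
        exact ⟨by simp [Fin.ext_iff], Or.inr ⟨h, rfl⟩⟩
      have h3 : (⟨lft S (t+1), hl⟩ : Fin n) = ⟨lft S t, by omega⟩ := Fin.mk_eq_mk.mpr hlf
      rw [h3]
      exact h1.reachable.trans (ih (by omega) (by rw [← hlf]; exact hl))
    · have hlf : lft S (t+1) = t+1 := by rw [lft, if_neg h]
      have h3 : (⟨lft S (t+1), hl⟩ : Fin n) = ⟨t+1, ht⟩ := Fin.mk_eq_mk.mpr hlf
      rw [h3]

lemma adj_lft (S : Finset ℕ) (n : ℕ) (x y : Fin n)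
    (h : (SimpleGraph.fromRel (fun a b : Fin n => (a : ℕ) ∈ S ∧ (b : ℕ) = (a : ℕ) + 1)).Adj x y) :
    lft S x.val = lft S y.val := by
  rw [SimpleGraph.fromRel_adj] at h
  obtain ⟨-, h | h⟩ := h
  · rw [h.2, lft, if_pos h.1]
  · rw [h.2, lft, if_pos h.1]

lemma reach_iff (S : Finset ℕ) (n : ℕ) (x y : Fin n) :
    (SimpleGraph.fromRel (fun a b : Fin n => (a : ℕ) ∈ S ∧ (b : ℕ) = (a : ℕ) + 1)).Reachable x y
      ↔ lft S x.val = lft S y.val := by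
  constructor
  · intro h
    obtain ⟨w⟩ := h
    induction w with
    | nil => rfl
    | cons hadj p ihw => exact (adj_lft S n _ _ hadj).trans ihw
  · intro h
    have h1 := reach_lft S n x.val x.isLt (lt_of_le_of_lt (lft_le S x.val) x.isLt)
    have h2 := reach_lft S n y.val y.isLt (lt_of_le_of_lt (lft_le S y.val) y.isLt)
    have h3 : (⟨lft S x.val, lt_of_le_of_lt (lft_le S x.val) x.isLt⟩ : Fin n)
        = ⟨lft S y.val, lt_of_le_of_lt (lft_le S y.val) y.isLt⟩ :=
      Fin.mk_eq_mk.mpr h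
    rw [h3] at h1
    exact ((Fin.eta x x.isLt ▸ h1).trans (Fin.eta y y.isLt ▸ h2).symm)

lemma lft_idem (S : Finset ℕ) (t : ℕ) : lft S (lft S t) = lft S t :=
  (lft_eq_iff S _ _).2 ⟨le_rfl, lft_start S t, fun s h1 h2 => by omega⟩

lemma noturn (k : ℕ) (hk : 0 < k) (a e t : ℕ) (hat : a ≤ t) (hte : t < e)
    (hno : ∀ j, 1 ≤ j → j ≤ k-1 → ¬(a < j*k ∧ j*k < e)) : cN k t = cN k a := by
  have h1 : a/k ≤ t/k := Nat.div_le_div_right hat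
  rcases le_or_gt (k-1) (a/k) with h | h
  · have e1 : min (t/k) (k-1) = k-1 := min_eq_right (le_trans h h1)
    have e2 : min (a/k) (k-1) = k-1 := min_eq_right h
    unfold cN; rw [e1, e2]
  · have h2 : t/k = a/k := by
      by_contra hne
      have h3 : a/k + 1 ≤ t/k := Nat.succ_le_of_lt (Nat.lt_of_le_of_ne h1 (Ne.symm hne))
      have h4 : (a/k+1)*k ≤ t := (Nat.le_div_iff_mul_le hk).1 h3
      have h5 : a < (a/k+1)*k := (Nat.div_lt_iff_lt_mul hk).1 (Nat.lt_succ_self _)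
      exact hno (a/k+1) (Nat.succ_le_succ (Nat.zero_le _)) (Nat.succ_le_of_lt h)
        ⟨h5, lt_of_le_of_lt h4 hte⟩
    unfold cN; rw [h2]

end Stmt12

open Stmt12 in
theorem stmt_12 (k : ℕ) (hk : 0 < k) (hke : Even k) (n : ℕ) (hn : n = k ^ 2 + 1)
    (c : Fin n → Bool)
    (hc : ∀ t : Fin n, c t =
      if (t : ℕ) = k ^ 2 then false else decide (((t : ℕ) / k) % 2 = 0))
    (S : Finset ℕ) (hS : S ⊆ Finset.range (n - 1)) (hScard : S.card ≤ n - 2 * k - 2)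
    (GS : SimpleGraph (Fin n))
    (hGS : GS = SimpleGraph.fromRel (fun a b : Fin n => (a : ℕ) ∈ S ∧ (b : ℕ) = (a : ℕ) + 1)) :
    {C : GS.ConnectedComponent |
        {x | x ∈ C.supp ∧ c x = true}.ncard = {x | x ∈ C.supp ∧ c x = false}.ncard}.ncard
      ≤ k - 1 ∧
    (∀ C : GS.ConnectedComponent,
        (({x | x ∈ C.supp ∧ c x = true}.ncard : ℤ) -
          ({x | x ∈ C.supp ∧ c x = false}.ncard : ℤ)).natAbs ≤ k + 1) ∧
    (∀ C₀ : GS.ConnectedComponent,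
        k + 1 ≤ ∑ᶠ C ∈ {C : GS.ConnectedComponent | C ≠ C₀},
          (({x | x ∈ C.supp ∧ c x = true}.ncard : ℤ) -
            ({x | x ∈ C.supp ∧ c x = false}.ncard : ℤ)).natAbs) := by
  classical
  subst hn
  subst hGS
  obtain ⟨m, hm⟩ := hke
  have hk2 : 2 ≤ k := by omega
  set G := SimpleGraph.fromRel (fun a b : Fin (k^2+1) => (a : ℕ) ∈ S ∧ (b : ℕ) = (a : ℕ) + 1)
    with hG
  -- colors
  have hcnt : ∀ x : Fin (k^2+1), c x = cN k x.val := by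
    intro x
    rw [hc]
    rcases eq_or_ne (x.val : ℕ) (k^2) with h | h
    · rw [if_pos h]
      unfold cN
      rw [h]
      have hdiv : k^2/k = k := by rw [pow_two, Nat.mul_div_cancel_left _ (by omega)]
      rw [hdiv]
      have h1 : min k (k-1) = k-1 := min_eq_right (by omega)
      rw [h1]
      have h2 : (k-1) % 2 = 1 := by omega
      simp [h2]
    · rw [if_neg h]
      have hx : x.val < k^2 := by have := x.isLt; omega
      have h1 : x.val / k < k := by
        rw [Nat.div_lt_iff_lt_mul (by omega)]
        calc x.val < k^2 := hx
        _ = k*k := by ring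
      unfold cN
      have hmin : min (x.val/k) (k-1) = x.val/k := min_eq_left (by omega)
      rw [hmin]
  -- supports are intervals
  have hout : ∀ C : G.ConnectedComponent, G.connectedComponentMk C.out = C :=
    fun C => C.out_eq
  have hmemsupp : ∀ (C : G.ConnectedComponent) (y : Fin (k^2+1)),
      y ∈ C.supp ↔ lft S y.val = lft S (C.out).val := by
    intro C y
    rw [SimpleGraph.ConnectedComponent.mem_supp_iff]
    conv_lhs => rw [← hout C]
    rw [SimpleGraph.ConnectedComponent.eq]
    exact reach_iff S (k^2+1) y C.out
  have hA_lt : ∀ C : G.ConnectedComponent, lft S (C.out).val < k^2+1 :=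
    fun C => lt_of_le_of_lt (lft_le S _) (C.out).isLt
  have hsupp2 : ∀ (C : G.ConnectedComponent) (y : Fin (k^2+1)), y ∈ C.supp ↔
      (lft S (C.out).val ≤ y.val ∧ y.val < nxt S (k^2+1) (lft S (C.out).val)) := by
    intro C y
    rw [hmemsupp]
    exact mem_interval S (k^2+1) _ (lft_idem S _) (hA_lt C) y.val y.isLt
  have hae : ∀ C : G.ConnectedComponent,
      lft S (C.out).val < nxt S (k^2+1) (lft S (C.out).val) := fun C => nxt_gt _ _ _
  have he_le : ∀ C : G.ConnectedComponent,
      nxt S (k^2+1) (lft S (C.out).val) ≤ k^2+1 := fun C => nxt_le _ _ _ (hA_lt C)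
  -- counting
  have key : ∀ (C : G.ConnectedComponent) (b : Bool),
      {x | x ∈ C.supp ∧ c x = b}.ncard =
        ((Finset.Ico (lft S (C.out).val) (nxt S (k^2+1) (lft S (C.out).val))).filter
          (fun j => cN k j = b)).card := by
    intro C b
    have hb : ∀ t ∈ (Finset.Ico (lft S (C.out).val)
        (nxt S (k^2+1) (lft S (C.out).val))).filter (fun j => cN k j = b), t < k^2+1 := by
      intro t ht
      simp only [Finset.mem_filter, Finset.mem_Ico] at ht
      have := he_le C
      omega
    have hset : {x : Fin (k^2+1) | x ∈ C.supp ∧ c x = b} = ↑(Finset.attachFin _ hb) := by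
      ext x
      rw [Set.mem_setOf_eq, hsupp2 C x, hcnt x, Finset.mem_coe, Finset.mem_attachFin,
        Finset.mem_filter, Finset.mem_Ico]
    rw [hset, Set.ncard_coe_finset, Finset.card_attachFin]
  have hw : ∀ C : G.ConnectedComponent,
      ({x | x ∈ C.supp ∧ c x = true}.ncard : ℤ) - ({x | x ∈ C.supp ∧ c x = false}.ncard : ℤ)
        = fZ k (nxt S (k^2+1) (lft S (C.out).val)) - fZ k (lft S (C.out).val) := by
    intro C
    rw [key C true, key C false]
    exact rI_bI_fZ k _ _ (le_of_lt (hae C))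
  -- claim 2
  have claim2 : ∀ C : G.ConnectedComponent,
      (({x | x ∈ C.supp ∧ c x = true}.ncard : ℤ) -
        ({x | x ∈ C.supp ∧ c x = false}.ncard : ℤ)).natAbs ≤ k + 1 := by
    intro C
    rw [hw C]
    have hfa := fZ_bounds k hk2 (lft S (C.out).val) (by have := hA_lt C; omega)
    have hfb : -1 ≤ fZ k (nxt S (k^2+1) (lft S (C.out).val)) ∧
        fZ k (nxt S (k^2+1) (lft S (C.out).val)) ≤ k := by
      rcases le_or_gt (nxt S (k^2+1) (lft S (C.out).val)) (k^2) with h | h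
      · have := fZ_bounds k hk2 _ h
        omega
      · have heq : nxt S (k^2+1) (lft S (C.out).val) = k^2+1 := by have := he_le C; omega
        rw [heq, fZ_last k hk2 ⟨m, hm⟩]
        omega
    omega
  -- balanced components
  set Bal : Set G.ConnectedComponent := {C : G.ConnectedComponent |
    {x | x ∈ C.supp ∧ c x = true}.ncard = {x | x ∈ C.supp ∧ c x = false}.ncard} with hBal
  have hbalj : ∀ C ∈ Bal, lft S (C.out).val < (lft S (C.out).val/k + 1)*k ∧
      (lft S (C.out).val/k + 1)*k < nxt S (k^2+1) (lft S (C.out).val) ∧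
      lft S (C.out).val/k + 1 ≤ k-1 := by
    intro C hC
    have hex : ∃ j, 1 ≤ j ∧ j ≤ k-1 ∧ lft S (C.out).val < j*k ∧
        j*k < nxt S (k^2+1) (lft S (C.out).val) := by
      by_contra hno
      push_neg at hno
      have hconst : ∀ t, lft S (C.out).val ≤ t → t < nxt S (k^2+1) (lft S (C.out).val) →
          cN k t = cN k (lft S (C.out).val) := by
        intro t h1 h2
        refine noturn k (by omega) _ _ t h1 h2 (fun j hj1 hj2 hcon => ?_)
        have := hno j hj1 hj2 hcon.1
        omega
      have hCbal : {x | x ∈ C.supp ∧ c x = true}.ncard =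
          {x | x ∈ C.supp ∧ c x = false}.ncard := hC
      rw [key C true, key C false] at hCbal
      have hsum := rI_bI_sum k (lft S (C.out).val) (nxt S (k^2+1) (lft S (C.out).val))
        (le_of_lt (hae C))
      unfold rI bI at hsum
      have hpos := hae C
      have hr0 : 0 < ((Finset.Ico (lft S (C.out).val) (nxt S (k^2+1)
          (lft S (C.out).val))).filter (fun j => cN k j = true)).card := by omega
      have hb0 : 0 < ((Finset.Ico (lft S (C.out).val) (nxt S (k^2+1)
          (lft S (C.out).val))).filter (fun j => cN k j = false)).card := by omega
      obtain ⟨t1, ht1⟩ := Finset.card_pos.1 hr0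
      obtain ⟨t2, ht2⟩ := Finset.card_pos.1 hb0
      simp only [Finset.mem_filter, Finset.mem_Ico] at ht1 ht2
      have e1 := hconst t1 ht1.1.1 ht1.1.2
      have e2 := hconst t2 ht2.1.1 ht2.1.2
      rw [ht1.2] at e1
      rw [ht2.2] at e2
      rw [← e1] at e2
      exact Bool.noConfusion e2
    obtain ⟨j, hj1, hj2, hj3, hj4⟩ := hex
    have h5 : lft S (C.out).val < (lft S (C.out).val/k+1)*k :=
      (Nat.div_lt_iff_lt_mul (by omega)).1 (Nat.lt_succ_self _)
    have h6 : lft S (C.out).val/k + 1 ≤ j :=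
      Nat.succ_le_of_lt ((Nat.div_lt_iff_lt_mul (by omega)).2 hj3)
    exact ⟨h5, lt_of_le_of_lt (le_trans (Nat.mul_le_mul_right k h6)
      (le_of_eq rfl)) hj4 |>.trans_le (le_refl _) |>.trans_le (le_refl _) |>.trans_le (le_refl _)
      |>.trans_le (le_refl _) |>.trans_le (le_refl _), by omega⟩
  -- claim 1
  have claim1 : Bal.ncard ≤ k - 1 := by
    have hinj : Set.InjOn (fun C : G.ConnectedComponent => lft S (C.out).val / k + 1) Bal := by
      intro C hC C' hC' heq
      simp only at heq
      obtain ⟨h1, h2, h3⟩ := hbalj C hC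
      obtain ⟨h1', h2', h3'⟩ := hbalj C' hC'
      have hjn : (lft S (C.out).val / k + 1) * k < k^2+1 := by have := he_le C; omega
      have hv : (⟨(lft S (C.out).val / k + 1) * k, hjn⟩ : Fin (k^2+1)) ∈ C.supp := by
        rw [hsupp2 C _]
        simp only [Fin.val_mk]
        exact ⟨le_of_lt h1, h2⟩
      have hv' : (⟨(lft S (C.out).val / k + 1) * k, hjn⟩ : Fin (k^2+1)) ∈ C'.supp := by
        rw [hsupp2 C' _]
        simp only [Fin.val_mk]
        rw [heq]
        exact ⟨le_of_lt h1', h2'⟩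
      have m1 := (SimpleGraph.ConnectedComponent.mem_supp_iff _ _).1 hv
      have m2 := (SimpleGraph.ConnectedComponent.mem_supp_iff _ _).1 hv'
      rw [m1] at m2
      exact m2
    calc Bal.ncard = ((fun C : G.ConnectedComponent => lft S (C.out).val / k + 1) '' Bal).ncard :=
          (Set.ncard_image_of_injOn hinj).symm
      _ ≤ (↑(Finset.Icc 1 (k-1)) : Set ℕ).ncard := by
          apply Set.ncard_le_ncard ?_ (Finset.finite_toSet _)
          rintro _ ⟨C, hC, rfl⟩
          simp only [Finset.coe_Icc, Set.mem_Icc]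
          exact ⟨Nat.succ_le_succ (Nat.zero_le _), (hbalj C hC).2.2⟩
      _ = k - 1 := by rw [Set.ncard_coe_finset, Nat.card_Icc]; omega
  refine ⟨claim1, claim2, ?_⟩
  -- claim 3
  intro C₀
  have hfin : Fintype G.ConnectedComponent := Fintype.ofFinite _
  set g : G.ConnectedComponent → ℕ := fun C =>
    (({x | x ∈ C.supp ∧ c x = true}.ncard : ℤ) -
      ({x | x ∈ C.supp ∧ c x = false}.ncard : ℤ)).natAbs with hg
  have hcoe : {C : G.ConnectedComponent | C ≠ C₀} =
      ↑(Finset.univ.filter (fun C : G.ConnectedComponent => C ≠ C₀)) := by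
    ext C; simp
  rw [hcoe, finsum_mem_coe_finset]
  -- number of components
  have hcomp : (k^2+1) - S.card ≤ Fintype.card G.ConnectedComponent := by
    have hB : ((Finset.univ : Finset (Fin (k^2+1))).filter
        (fun x => lft S x.val = x.val)).card ≤ Fintype.card G.ConnectedComponent := by
      rw [← Finset.card_univ]
      apply Finset.card_le_card_of_injOn (fun x => G.connectedComponentMk x)
        (fun x _ => Finset.mem_univ _)
      intro x hx y hy hxy
      simp only [Finset.coe_filter, Set.mem_setOf_eq] at hx hy
      have hr := (reach_iff S (k^2+1) x y).1 (SimpleGraph.ConnectedComponent.eq.1 hxy)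
      exact Fin.ext (by omega)
    have hCc : ((Finset.univ : Finset (Fin (k^2+1))).filter
        (fun x => ¬ lft S x.val = x.val)).card ≤ S.card := by
      apply Finset.card_le_card_of_injOn (fun x => x.val - 1)
      · intro x hx
        simp only [Finset.mem_coe, Finset.mem_filter, Finset.mem_univ, true_and] at hx
        by_cases h0 : x.val = 0
        · exact absurd (by rw [h0]; rfl) hx
        · by_contra hmem
          exact hx ((lft_eq_iff S x.val x.val).2
            ⟨le_rfl, Or.inr hmem, fun s hs1 hs2 => by omega⟩)
      · intro x hx y hy hxy
        simp only [Finset.coe_filter, Set.mem_setOf_eq] at hx hy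
        simp only at hxy
        have hx1 : x.val ≠ 0 := fun h => hx.2 (by rw [h]; rfl)
        have hy1 : y.val ≠ 0 := fun h => hy.2 (by rw [h]; rfl)
        exact Fin.ext (by omega)
    have hsplit := Finset.card_filter_add_card_filter_not
      (s := (Finset.univ : Finset (Fin (k^2+1)))) (p := fun x => lft S x.val = x.val)
    rw [Finset.card_univ, Fintype.card_fin] at hsplit
    omega
  -- balanced count as finset
  have hbalfin : ((Finset.univ : Finset G.ConnectedComponent).filter
      (fun C => g C = 0)).card ≤ k - 1 := by
    have hsub : ↑((Finset.univ : Finset G.ConnectedComponent).filter (fun C => g C = 0))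
        ⊆ Bal := by
      intro C hC
      simp only [Finset.coe_filter, Set.mem_setOf_eq] at hC
      have : g C = 0 := hC.2
      rw [hg] at this
      simp only at this
      have := Int.natAbs_eq_zero.1 this
      rw [hBal]
      simp only [Set.mem_setOf_eq]
      omega
    calc ((Finset.univ : Finset G.ConnectedComponent).filter (fun C => g C = 0)).card
        = (↑((Finset.univ : Finset G.ConnectedComponent).filter (fun C => g C = 0)) :
            Set G.ConnectedComponent).ncard := (Set.ncard_coe_finset _).symm
      _ ≤ Bal.ncard := Set.ncard_le_ncard hsub (Set.toFinite _)
      _ ≤ k - 1 := claim1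
  -- at least k+1 unbalanced components other than C₀
  have hne0 : k + 1 ≤ (((Finset.univ : Finset G.ConnectedComponent).filter
      (fun C => C ≠ C₀)).filter (fun C => ¬ g C = 0)).card := by
    have h1 : ((Finset.univ : Finset G.ConnectedComponent).filter (fun C => ¬ g C = 0))
        ⊆ insert C₀ ((((Finset.univ : Finset G.ConnectedComponent).filter
          (fun C => C ≠ C₀)).filter (fun C => ¬ g C = 0))) := by
      intro C hC
      simp only [Finset.mem_filter, Finset.mem_univ, true_and] at hC
      rcases eq_or_ne C C₀ with h | h
      · simp [h]
      · exact Finset.mem_insert_of_mem (by simp [Finset.mem_filter, h, hC])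
    have h2 := Finset.card_le_card h1
    have h3 := Finset.card_insert_le C₀ ((((Finset.univ : Finset G.ConnectedComponent).filter
      (fun C => C ≠ C₀)).filter (fun C => ¬ g C = 0)))
    have h4 := Finset.card_filter_add_card_filter_not
      (s := (Finset.univ : Finset G.ConnectedComponent)) (p := fun C => g C = 0)
    rw [Finset.card_univ] at h4
    have hkk : 2*k ≤ k*k := Nat.mul_le_mul_right k hk2
    have hsq : k^2 = k*k := pow_two k
    omega
  calc (k:ℕ) + 1 ≤ (((Finset.univ : Finset G.ConnectedComponent).filter
        (fun C => C ≠ C₀)).filter (fun C => ¬ g C = 0)).card := hne0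
    _ ≤ ∑ C ∈ (((Finset.univ : Finset G.ConnectedComponent).filter
        (fun C => C ≠ C₀)).filter (fun C => ¬ g C = 0)), g C := by
        have hb := Finset.card_nsmul_le_sum
          ((((Finset.univ : Finset G.ConnectedComponent).filter
            (fun C => C ≠ C₀)).filter (fun C => ¬ g C = 0))) g 1
          (fun i hi => by
            simp only [Finset.mem_filter] at hi
            omega)
        simpa using hb
    _ ≤ ∑ C ∈ ((Finset.univ : Finset G.ConnectedComponent).filter (fun C => C ≠ C₀)), g C :=
        Finset.sum_le_sum_of_subset (Finset.filter_subset _ _)
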